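/- Let V_1, V_2 be linear subspaces of F_2^n of dimension n−k with V_1^⊥ = span(e_1,…,e_k), V_2^⊥ = span(e_k,…,e_{2k−1}) (so V_1^⊥ ∩ V_2^⊥ = {0, e_k}), where 2k−1 ≤ n. Then the affine subspace e_k + V_1 is disjoint from V_2, and the function f = 1_{e_k+V_1} + 1_{V_2} is Boolean with f̂(0) = 1/2^{k−1}, f̂(α) = −1/2^k for α ∈ e_k + (span(e_1,…,e_{k−1}) \ {0}), f̂(α) = 1/2^k for α in (span(e_1,…,e_{k−1}) \ {0}) ∪ (e_k + (span(e_{k+1},…,e_{2k−1}) \ {0})) ∪ (span(e_{k+1},…,e_{2k−1}) \ {0}), and f̂(α) = 0 otherwise. -/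

import Mathlib

open Finset
open scoped Classical

/-- The Fourier coefficient `f̂(α) = E_x[f(x)·(-1)^⟨α,x⟩]` of `f : F_2^n → ℝ`. -/
noncomputable def fc {n : ℕ} (f : (Fin n → ZMod 2) → ℝ) (α : Fin n → ZMod 2) : ℝ :=
  (∑ x : Fin n → ZMod 2, f x * (-1 : ℝ) ^ (∑ i, α i * x i : ZMod 2).val) / 2 ^ n

lemma zmod2_cases (a : ZMod 2) : a = 0 ∨ a = 1 := by revert a; decide

lemma zmod2_add_eq_zero (a b : ZMod 2) : a + b = 0 ↔ a = b := by
  revert a b; decide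

lemma pow_val_add (a b : ZMod 2) :
    (-1 : ℝ) ^ ((a + b).val) = (-1 : ℝ) ^ a.val * (-1 : ℝ) ^ b.val := by
  rcases zmod2_cases a with rfl | rfl <;> rcases zmod2_cases b with rfl | rfl <;>
    norm_num [show (1 : ZMod 2) + 1 = 0 by decide, show ZMod.val (2 : ZMod 2) = 0 by decide, ZMod.val_one, ZMod.val_zero]

lemma mem_span_single {n : ℕ} (s : Set (Fin n)) (y : Fin n → ZMod 2) :
    y ∈ Submodule.span (ZMod 2) ((fun i : Fin n => Pi.single i (1 : ZMod 2)) '' s) ↔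
      ∀ i, i ∉ s → y i = 0 := by
  constructor
  · intro hy
    induction hy using Submodule.span_induction with
    | mem x hx =>
      obtain ⟨j, hj, rfl⟩ := hx
      intro i hi
      exact Pi.single_eq_of_ne (fun h : i = j => hi (h ▸ hj)) 1
    | zero => simp
    | add x y _ _ hx hy => intro i hi; simp [hx i hi, hy i hi]
    | smul c x _ hx => intro i hi; simp [hx i hi]
  · intro hy
    have h : y = ∑ i : Fin n, Pi.single i (y i) := (Finset.univ_sum_single y).symm
    rw [h]
    refine Submodule.sum_mem _ fun i _ => ?_
    by_cases hi : i ∈ s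
    · have h2 : Pi.single i (y i) =
          (y i • Pi.single i (1 : ZMod 2) : Fin n → ZMod 2) := by
        ext j
        by_cases hj : j = i
        · subst hj; simp
        · simp [Pi.single_eq_of_ne hj]
      rw [h2]
      exact Submodule.smul_mem _ _ (Submodule.subset_span ⟨i, hi, rfl⟩)
    · rw [hy i hi]; simp

lemma dot_single {n : ℕ} (y : Fin n → ZMod 2) (j : Fin n) :
    (∑ i, y i * (Pi.single j (1 : ZMod 2) : Fin n → ZMod 2) i) = y j := by
  rw [Fintype.sum_eq_single j]
  · simp
  · intro i hi; simp [Pi.single_eq_of_ne hi]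

lemma char_sum {n : ℕ} (V : Submodule (ZMod 2) (Fin n → ZMod 2)) (α : Fin n → ZMod 2) :
    ∑ v ∈ (V : Set (Fin n → ZMod 2)).toFinset,
        (-1 : ℝ) ^ (∑ i, α i * v i : ZMod 2).val =
      if ∀ v ∈ V, (∑ i, α i * v i : ZMod 2) = 0 then (Nat.card V : ℝ) else 0 := by
  split_ifs with h
  · have h1 : ∀ v ∈ (V : Set (Fin n → ZMod 2)).toFinset,
        (-1 : ℝ) ^ (∑ i, α i * v i : ZMod 2).val = 1 := fun v hv => by
      rw [h v (Set.mem_toFinset.1 hv)]; simp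
    rw [Finset.sum_congr rfl h1, Finset.sum_const, nsmul_eq_mul, mul_one,
      Set.toFinset_card, Nat.card_eq_fintype_card]
    exact congrArg _ (Fintype.card_congr (Equiv.refl _))
  · push_neg at h
    obtain ⟨v₀, hv₀, hd⟩ := h
    have hd1 : (∑ i, α i * v₀ i : ZMod 2) = 1 := by
      rcases (show ∀ a : ZMod 2, a = 0 ∨ a = 1 by decide) (∑ i, α i * v₀ i) with h' | h'
      · exact absurd h' hd
      · exact h'
    set S := ∑ v ∈ (V : Set (Fin n → ZMod 2)).toFinset,
        (-1 : ℝ) ^ (∑ i, α i * v i : ZMod 2).val with hS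
    have step : ∀ v, (-1 : ℝ) ^ (∑ i, α i * (v + v₀) i : ZMod 2).val =
        -(-1 : ℝ) ^ (∑ i, α i * v i : ZMod 2).val := by
      intro v
      have e : (∑ i, α i * (v + v₀) i : ZMod 2) = (∑ i, α i * v i) + ∑ i, α i * v₀ i := by
        rw [← Finset.sum_add_distrib]
        exact Finset.sum_congr rfl fun i _ => by simp [Pi.add_apply, mul_add]
      rw [e, pow_val_add, hd1]
      simp [ZMod.val_one]
    have key : S = ∑ v ∈ (V : Set (Fin n → ZMod 2)).toFinset,
        -((-1 : ℝ) ^ (∑ i, α i * v i : ZMod 2).val) := by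
      rw [hS]
      refine Finset.sum_nbij' (i := fun v => v + v₀) (j := fun v => v + v₀)
        (fun v hv => Set.mem_toFinset.2 (V.add_mem (Set.mem_toFinset.1 hv) hv₀))
        (fun v hv => Set.mem_toFinset.2 (V.add_mem (Set.mem_toFinset.1 hv) hv₀))
        (fun v _ => by ext i; simp [add_assoc, CharTwo.add_self_eq_zero])
        (fun v _ => by ext i; simp [add_assoc, CharTwo.add_self_eq_zero])
        (fun v _ => ?_)
      rw [step v]
      ring
    rw [Finset.sum_neg_distrib] at key
    linarith

lemma fc_eval_aux {n : ℕ} (A : Set (Fin n → ZMod 2)) (g : (Fin n → ZMod 2) → ℝ) :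
    ∑ x : Fin n → ZMod 2, A.indicator 1 x * g x = ∑ x ∈ A.toFinset, g x := by
  rw [← Finset.sum_subset (Finset.subset_univ A.toFinset)]
  · exact Finset.sum_congr rfl fun x hx => by
      rw [Set.indicator_of_mem (Set.mem_toFinset.1 hx)]; simp
  · intro x _ hx
    rw [Set.indicator_of_notMem (fun h => hx (Set.mem_toFinset.2 h))]; simp

set_option maxHeartbeats 1000000 in
lemma fc_eval {n : ℕ} (V₁ V₂ : Submodule (ZMod 2) (Fin n → ZMod 2)) (a α : Fin n → ZMod 2) :
    fc (Set.indicator ((a + ·) '' (V₁ : Set (Fin n → ZMod 2))) 1 +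
        Set.indicator (V₂ : Set (Fin n → ZMod 2)) 1) α =
      ((-1 : ℝ) ^ (∑ i, α i * a i : ZMod 2).val *
          ∑ v ∈ (V₁ : Set (Fin n → ZMod 2)).toFinset,
            (-1 : ℝ) ^ (∑ i, α i * v i : ZMod 2).val +
        ∑ v ∈ (V₂ : Set (Fin n → ZMod 2)).toFinset,
          (-1 : ℝ) ^ (∑ i, α i * v i : ZMod 2).val) / 2 ^ n := by
  unfold fc
  congr 1
  simp only [Pi.add_apply, add_mul, Finset.sum_add_distrib]
  rw [show ∑ x : Fin n → ZMod 2,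
      Set.indicator (V₂ : Set (Fin n → ZMod 2)) (1 : (Fin n → ZMod 2) → ℝ) x *
        (-1 : ℝ) ^ (∑ i, α i * x i : ZMod 2).val =
      ∑ v ∈ (V₂ : Set (Fin n → ZMod 2)).toFinset,
        (-1 : ℝ) ^ (∑ i, α i * v i : ZMod 2).val from fc_eval_aux _ _]
  congr 1
  have hadd : ∀ x v : Fin n → ZMod 2,
      (∑ i, α i * (x + v) i : ZMod 2) = (∑ i, α i * x i) + ∑ i, α i * v i := fun x v => by
    rw [← Finset.sum_add_distrib]
    exact Finset.sum_congr rfl fun i _ => by simp [Pi.add_apply, mul_add]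
  have hind : ∀ y : Fin n → ZMod 2,
      Set.indicator ((a + ·) '' (V₁ : Set (Fin n → ZMod 2))) (1 : (Fin n → ZMod 2) → ℝ) (a + y) =
        Set.indicator (V₁ : Set (Fin n → ZMod 2)) (1 : (Fin n → ZMod 2) → ℝ) y := by
    intro y
    by_cases h : y ∈ V₁
    · have hm : a + y ∈ (a + ·) '' (V₁ : Set (Fin n → ZMod 2)) := ⟨y, h, rfl⟩
      rw [Set.indicator_of_mem hm, Set.indicator_of_mem h]
      rfl
    · rw [Set.indicator_of_notMem, Set.indicator_of_notMem h]
      rintro ⟨v, hv, he⟩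
      exact h (add_left_cancel he ▸ hv)
  calc ∑ x : Fin n → ZMod 2,
        Set.indicator ((a + ·) '' (V₁ : Set (Fin n → ZMod 2))) (1 : (Fin n → ZMod 2) → ℝ) x *
          (-1 : ℝ) ^ (∑ i, α i * x i : ZMod 2).val
      = ∑ y : Fin n → ZMod 2,
          Set.indicator ((a + ·) '' (V₁ : Set (Fin n → ZMod 2))) (1 : (Fin n → ZMod 2) → ℝ) (a + y) *
            (-1 : ℝ) ^ (∑ i, α i * (a + y) i : ZMod 2).val :=
        (Fintype.sum_equiv (Equiv.addLeft a) _ _ fun y => rfl).symm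
    _ = (-1 : ℝ) ^ (∑ i, α i * a i : ZMod 2).val *
          ∑ y : Fin n → ZMod 2,
            Set.indicator (V₁ : Set (Fin n → ZMod 2)) (1 : (Fin n → ZMod 2) → ℝ) y *
              (-1 : ℝ) ^ (∑ i, α i * y i : ZMod 2).val := by
        rw [Finset.mul_sum]
        refine Finset.sum_congr rfl fun y _ => ?_
        rw [hind y, hadd a y, pow_val_add]
        ring
    _ = _ := by rw [fc_eval_aux]
set_option maxHeartbeats 2000000 in
/-- The Fourier spectrum of a disjoint union of two affine subspaces whose orthogonal
complements intersect minimally.  (Indices are 0-based: the paper's `e_i` is `e (i-1)`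
here, so the paper's `e_k` is `e ⟨k-1, _⟩`.) -/
theorem stmt_19 {n k : ℕ} (hk : 1 ≤ k) (hn : 2 * k - 1 ≤ n)
    (V₁ V₂ : Submodule (ZMod 2) (Fin n → ZMod 2))
    (hd1 : Module.finrank (ZMod 2) V₁ = n - k)
    (hd2 : Module.finrank (ZMod 2) V₂ = n - k)
    (h1 : {y : Fin n → ZMod 2 | ∀ v ∈ V₁, (∑ i, y i * v i : ZMod 2) = 0} =
      (Submodule.span (ZMod 2)
        ((fun i : Fin n => Pi.single i (1 : ZMod 2)) '' {i : Fin n | (i : ℕ) < k}) :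
        Set (Fin n → ZMod 2)))
    (h2 : {y : Fin n → ZMod 2 | ∀ v ∈ V₂, (∑ i, y i * v i : ZMod 2) = 0} =
      (Submodule.span (ZMod 2)
        ((fun i : Fin n => Pi.single i (1 : ZMod 2)) ''
          {i : Fin n | k - 1 ≤ (i : ℕ) ∧ (i : ℕ) < 2 * k - 1}) :
        Set (Fin n → ZMod 2))) :
    ∀ ek : Fin n → ZMod 2, ek = Pi.single (⟨k - 1, by omega⟩ : Fin n) (1 : ZMod 2) →
    ∀ f : (Fin n → ZMod 2) → ℝ,
      f = Set.indicator ((ek + ·) '' (V₁ : Set (Fin n → ZMod 2))) 1 +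
        Set.indicator (V₂ : Set (Fin n → ZMod 2)) 1 →
    ∀ S₁ S₂ : Submodule (ZMod 2) (Fin n → ZMod 2),
      S₁ = Submodule.span (ZMod 2)
        ((fun i : Fin n => Pi.single i (1 : ZMod 2)) '' {i : Fin n | (i : ℕ) < k - 1}) →
      S₂ = Submodule.span (ZMod 2)
        ((fun i : Fin n => Pi.single i (1 : ZMod 2)) ''
          {i : Fin n | k ≤ (i : ℕ) ∧ (i : ℕ) < 2 * k - 1}) →
    (Disjoint ((ek + ·) '' (V₁ : Set (Fin n → ZMod 2))) (V₂ : Set (Fin n → ZMod 2)) ∧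
     (∀ x, f x = 0 ∨ f x = 1) ∧
     fc f 0 = 1 / 2 ^ (k - 1) ∧
     (∀ α : Fin n → ZMod 2,
        (∃ γ ∈ S₁, γ ≠ 0 ∧ α = ek + γ) → fc f α = -(1 / 2 ^ k)) ∧
     (∀ α : Fin n → ZMod 2,
        ((α ∈ S₁ ∧ α ≠ 0) ∨ (∃ γ ∈ S₂, γ ≠ 0 ∧ α = ek + γ) ∨ (α ∈ S₂ ∧ α ≠ 0)) →
          fc f α = 1 / 2 ^ k) ∧
     (∀ α : Fin n → ZMod 2,
        α ≠ 0 →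
        ¬ (∃ γ ∈ S₁, γ ≠ 0 ∧ α = ek + γ) →
        ¬ ((α ∈ S₁ ∧ α ≠ 0) ∨ (∃ γ ∈ S₂, γ ≠ 0 ∧ α = ek + γ) ∨ (α ∈ S₂ ∧ α ≠ 0)) →
          fc f α = 0)) := by
  intro ek hek f hf S₁ S₂ hS₁ hS₂
  have hkn : k ≤ n := by omega
  set j0 : Fin n := ⟨k - 1, by omega⟩ with hj0
  -- coordinates of ek
  have hek_at : ek j0 = 1 := by rw [hek]; exact Pi.single_eq_same j0 1
  have hek_ne : ∀ i : Fin n, (i : ℕ) ≠ k - 1 → ek i = 0 := by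
    intro i hi
    rw [hek]
    exact Pi.single_eq_of_ne (fun h : i = j0 => hi (congrArg Fin.val h)) 1
  -- dot with ek
  have hdot : ∀ y : Fin n → ZMod 2, (∑ i, y i * ek i : ZMod 2) = y j0 := by
    intro y; rw [hek]; exact dot_single y j0
  -- pointwise sum expansion
  have hadd : ∀ y x v : Fin n → ZMod 2,
      (∑ i, y i * (x + v) i : ZMod 2) = (∑ i, y i * x i) + ∑ i, y i * v i := fun y x v => by
    rw [← Finset.sum_add_distrib]
    exact Finset.sum_congr rfl fun i _ => by simp [Pi.add_apply, mul_add]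
  -- characterizations of the orthogonal complements and spans
  have hW1 : ∀ y : Fin n → ZMod 2,
      (∀ v ∈ V₁, (∑ i, y i * v i : ZMod 2) = 0) ↔ ∀ i : Fin n, k ≤ (i : ℕ) → y i = 0 := by
    intro y
    have h := Set.ext_iff.1 h1 y
    simp only [Set.mem_setOf_eq, SetLike.mem_coe] at h
    rw [h, mem_span_single]
    constructor
    · intro h' i hi; exact h' i (by simp only [Set.mem_setOf_eq]; omega)
    · intro h' i hi; simp only [Set.mem_setOf_eq] at hi; exact h' i (by omega)
  have hW2 : ∀ y : Fin n → ZMod 2,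
      (∀ v ∈ V₂, (∑ i, y i * v i : ZMod 2) = 0) ↔
        ∀ i : Fin n, ¬(k - 1 ≤ (i : ℕ) ∧ (i : ℕ) < 2 * k - 1) → y i = 0 := by
    intro y
    have h := Set.ext_iff.1 h2 y
    simp only [Set.mem_setOf_eq, SetLike.mem_coe] at h
    rw [h, mem_span_single]
    constructor
    · intro h' i hi; exact h' i (by simp only [Set.mem_setOf_eq]; omega)
    · intro h' i hi; simp only [Set.mem_setOf_eq] at hi; exact h' i (by omega)
  have hS1m : ∀ y : Fin n → ZMod 2,
      y ∈ S₁ ↔ ∀ i : Fin n, k - 1 ≤ (i : ℕ) → y i = 0 := by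
    intro y
    rw [hS₁, mem_span_single]
    constructor
    · intro h' i hi; exact h' i (by simp only [Set.mem_setOf_eq]; omega)
    · intro h' i hi; simp only [Set.mem_setOf_eq] at hi; exact h' i (by omega)
  have hS2m : ∀ y : Fin n → ZMod 2,
      y ∈ S₂ ↔ ∀ i : Fin n, ¬(k ≤ (i : ℕ) ∧ (i : ℕ) < 2 * k - 1) → y i = 0 := by
    intro y
    rw [hS₂, mem_span_single]
    constructor
    · intro h' i hi; exact h' i (by simp only [Set.mem_setOf_eq]; omega)
    · intro h' i hi; simp only [Set.mem_setOf_eq] at hi; exact h' i (by omega)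
  -- cardinalities
  have hcard1 : ((Nat.card V₁ : ℕ) : ℝ) = 2 ^ (n - k) := by
    rw [Nat.card_eq_fintype_card, Module.card_eq_pow_finrank (K := ZMod 2) (V := V₁), hd1, ZMod.card]
    push_cast
    ring
  have hcard2 : ((Nat.card V₂ : ℕ) : ℝ) = 2 ^ (n - k) := by
    rw [Nat.card_eq_fintype_card, Module.card_eq_pow_finrank (K := ZMod 2) (V := V₂), hd2, ZMod.card]
    push_cast
    ring
  -- the main formula
  have hfc : ∀ α : Fin n → ZMod 2, fc f α =
      ((-1 : ℝ) ^ (α j0).val *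
          (if ∀ v ∈ V₁, (∑ i, α i * v i : ZMod 2) = 0 then (2 : ℝ) ^ (n - k) else 0) +
        (if ∀ v ∈ V₂, (∑ i, α i * v i : ZMod 2) = 0 then (2 : ℝ) ^ (n - k) else 0)) / 2 ^ n := by
    intro α
    rw [hf, fc_eval, char_sum, char_sum, hcard1, hcard2, hdot α]
  -- arithmetic
  have h2n : (2 : ℝ) ^ n = 2 ^ (n - k) * 2 ^ k := by
    rw [← pow_add]; congr 1; omega
  have h2k : (2 : ℝ) ^ k = 2 ^ (k - 1) * 2 := by
    rw [← pow_succ]; congr 1; omega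
  -- disjointness
  have hek_W1 : ∀ v ∈ V₁, (∑ i, ek i * v i : ZMod 2) = 0 :=
    (hW1 ek).2 fun i hi => hek_ne i (by omega)
  have hek_W2 : ∀ v ∈ V₂, (∑ i, ek i * v i : ZMod 2) = 0 :=
    (hW2 ek).2 fun i hi => hek_ne i (by omega)
  have hdisj : Disjoint ((ek + ·) '' (V₁ : Set (Fin n → ZMod 2)))
      (V₂ : Set (Fin n → ZMod 2)) := by
    rw [Set.disjoint_left]
    rintro x ⟨v, hv, rfl⟩ hx2
    have e1 : (∑ i, ek i * (ek + v) i : ZMod 2) = 0 := hek_W2 _ hx2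
    rw [hadd ek ek v, hdot ek, hek_at, hek_W1 v hv, add_zero] at e1
    exact one_ne_zero e1
  refine ⟨hdisj, ?_, ?_, ?_, ?_, ?_⟩
  · -- Booleanness
    intro x
    rw [hf]
    by_cases hx1 : x ∈ (ek + ·) '' (V₁ : Set (Fin n → ZMod 2)) <;>
      by_cases hx2 : x ∈ (V₂ : Set (Fin n → ZMod 2))
    · exact absurd hx2 (Set.disjoint_left.1 hdisj hx1)
    · right
      rw [Pi.add_apply, Set.indicator_of_mem hx1, Set.indicator_of_notMem hx2,
        Pi.one_apply]
      norm_num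
    · right
      rw [Pi.add_apply, Set.indicator_of_notMem hx1, Set.indicator_of_mem hx2,
        Pi.one_apply]
      norm_num
    · left
      rw [Pi.add_apply, Set.indicator_of_notMem hx1, Set.indicator_of_notMem hx2]
      norm_num
  · -- fc f 0
    rw [hfc 0]
    have c1 : ∀ v ∈ V₁, (∑ i, (0 : Fin n → ZMod 2) i * v i : ZMod 2) = 0 := by
      intro v _; simp
    have c2 : ∀ v ∈ V₂, (∑ i, (0 : Fin n → ZMod 2) i * v i : ZMod 2) = 0 := by
      intro v _; simp
    rw [if_pos c1, if_pos c2]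
    simp only [Pi.zero_apply, ZMod.val_zero, pow_zero, one_mul]
    rw [h2n, h2k]
    have hne : (2 : ℝ) ^ (n - k) ≠ 0 := by positivity
    have hne2 : (2 : ℝ) ^ (k - 1) ≠ 0 := by positivity
    field_simp
    ring
  · -- α = ek + γ, γ ∈ S₁ \ {0}
    rintro α ⟨γ, hγS, hγ0, rfl⟩
    have hsupp : ∀ i : Fin n, k - 1 ≤ (i : ℕ) → γ i = 0 := (hS1m γ).1 hγS
    have c1 : ∀ v ∈ V₁, (∑ i, (ek + γ) i * v i : ZMod 2) = 0 := by
      refine (hW1 _).2 fun i hi => ?_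
      rw [Pi.add_apply, hek_ne i (by omega), hsupp i (by omega), add_zero]
    have c2 : ¬∀ v ∈ V₂, (∑ i, (ek + γ) i * v i : ZMod 2) = 0 := by
      intro hc
      obtain ⟨j, hj⟩ := Function.ne_iff.1 hγ0
      have hjlt : (j : ℕ) < k - 1 := by
        by_contra hcon
        exact hj (hsupp j (by omega))
      have := (hW2 _).1 hc j (by omega)
      rw [Pi.add_apply, hek_ne j (by omega), zero_add] at this
      exact hj this
    have hval : (ek + γ) j0 = 1 := by
      rw [Pi.add_apply, hek_at, hsupp j0 le_rfl, add_zero]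
    rw [hfc, if_pos c1, if_neg c2, hval, ZMod.val_one, pow_one, add_zero, h2n]
    have hne : (2 : ℝ) ^ (n - k) ≠ 0 := by positivity
    have hnek : (2 : ℝ) ^ k ≠ 0 := by positivity
    field_simp
  · -- the 1/2^k cases
    rintro α (⟨hαS, hα0⟩ | ⟨γ, hγS, hγ0, rfl⟩ | ⟨hαS, hα0⟩)
    · -- α ∈ S₁ \ {0}
      have hsupp : ∀ i : Fin n, k - 1 ≤ (i : ℕ) → α i = 0 := (hS1m α).1 hαS
      have c1 : ∀ v ∈ V₁, (∑ i, α i * v i : ZMod 2) = 0 :=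
        (hW1 _).2 fun i hi => hsupp i (by omega)
      have c2 : ¬∀ v ∈ V₂, (∑ i, α i * v i : ZMod 2) = 0 := by
        intro hc
        obtain ⟨j, hj⟩ := Function.ne_iff.1 hα0
        have hjlt : (j : ℕ) < k - 1 := by
          by_contra hcon
          exact hj (hsupp j (by omega))
        exact hj ((hW2 _).1 hc j (by omega))
      have hval : α j0 = 0 := hsupp j0 le_rfl
      rw [hfc, if_pos c1, if_neg c2, hval, ZMod.val_zero, pow_zero, one_mul, add_zero, h2n]
      have hne : (2 : ℝ) ^ (n - k) ≠ 0 := by positivity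
      field_simp
    · -- α = ek + γ, γ ∈ S₂ \ {0}
      have hsupp : ∀ i : Fin n, ¬(k ≤ (i : ℕ) ∧ (i : ℕ) < 2 * k - 1) → γ i = 0 :=
        (hS2m γ).1 hγS
      have c1 : ¬∀ v ∈ V₁, (∑ i, (ek + γ) i * v i : ZMod 2) = 0 := by
        intro hc
        obtain ⟨j, hj⟩ := Function.ne_iff.1 hγ0
        have hjge : k ≤ (j : ℕ) ∧ (j : ℕ) < 2 * k - 1 := by
          by_contra hcon
          exact hj (hsupp j hcon)
        have := (hW1 _).1 hc j (by omega)
        rw [Pi.add_apply, hek_ne j (by omega), zero_add] at this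
        exact hj this
      have c2 : ∀ v ∈ V₂, (∑ i, (ek + γ) i * v i : ZMod 2) = 0 := by
        refine (hW2 _).2 fun i hi => ?_
        rw [Pi.add_apply, hek_ne i (by omega), hsupp i (by omega), add_zero]
      rw [hfc, if_neg c1, if_pos c2, mul_zero, zero_add, h2n]
      have hne : (2 : ℝ) ^ (n - k) ≠ 0 := by positivity
      field_simp
    · -- α ∈ S₂ \ {0}
      have hsupp : ∀ i : Fin n, ¬(k ≤ (i : ℕ) ∧ (i : ℕ) < 2 * k - 1) → α i = 0 :=
        (hS2m α).1 hαS
      have c1 : ¬∀ v ∈ V₁, (∑ i, α i * v i : ZMod 2) = 0 := by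
        intro hc
        obtain ⟨j, hj⟩ := Function.ne_iff.1 hα0
        have hjge : k ≤ (j : ℕ) ∧ (j : ℕ) < 2 * k - 1 := by
          by_contra hcon
          exact hj (hsupp j hcon)
        exact hj ((hW1 _).1 hc j (by omega))
      have c2 : ∀ v ∈ V₂, (∑ i, α i * v i : ZMod 2) = 0 :=
        (hW2 _).2 fun i hi => hsupp i (by omega)
      rw [hfc, if_neg c1, if_pos c2, mul_zero, zero_add, h2n]
      have hne : (2 : ℝ) ^ (n - k) ≠ 0 := by positivity
      field_simp
  · -- the zero cases
    intro α hα0 hne1 hne2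
    by_cases c1 : ∀ v ∈ V₁, (∑ i, α i * v i : ZMod 2) = 0 <;>
      by_cases c2 : ∀ v ∈ V₂, (∑ i, α i * v i : ZMod 2) = 0
    · -- both: α = ek, cancellation
      have p1 : ∀ i : Fin n, k ≤ (i : ℕ) → α i = 0 := (hW1 α).1 c1
      have p2 : ∀ i : Fin n, ¬(k - 1 ≤ (i : ℕ) ∧ (i : ℕ) < 2 * k - 1) → α i = 0 := (hW2 α).1 c2
      have hother : ∀ i : Fin n, (i : ℕ) ≠ k - 1 → α i = 0 := by
        intro i hi
        rcases lt_or_ge ((i : ℕ)) (k - 1) with h' | h'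
        · exact p2 i (by omega)
        · exact p1 i (by omega)
      have hval : α j0 = 1 := by
        rcases zmod2_cases (α j0) with h' | h'
        · exfalso
          apply hα0
          funext i
          by_cases hi : (i : ℕ) = k - 1
          · have : i = j0 := Fin.ext hi
            rw [this, h']; rfl
          · rw [hother i hi]; rfl
        · exact h'
      rw [hfc, if_pos c1, if_pos c2, hval, ZMod.val_one, pow_one]
      ring
    · -- c1, ¬c2 : contradiction
      exfalso
      have p1 : ∀ i : Fin n, k ≤ (i : ℕ) → α i = 0 := (hW1 α).1 c1
      rcases zmod2_cases (α j0) with h' | h'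
      · -- α ∈ S₁
        apply hne2
        left
        refine ⟨(hS1m α).2 fun i hi => ?_, hα0⟩
        by_cases hik : (i : ℕ) = k - 1
        · have hij : i = j0 := Fin.ext hik
          rw [hij]; exact h'
        · exact p1 i (by omega)
      · -- α = ek + (α + ek)
        apply hne1
        refine ⟨α + ek, (hS1m _).2 fun i hi => ?_, ?_, ?_⟩
        · by_cases hik : (i : ℕ) = k - 1
          · have hij : i = j0 := Fin.ext hik
            rw [hij, Pi.add_apply, h', hek_at]
            decide
          · rw [Pi.add_apply, p1 i (by omega), hek_ne i hik, add_zero]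
        · intro hz
          have hαek : α = ek := by
            funext i
            have := congrFun hz i
            rw [Pi.add_apply] at this
            exact (zmod2_add_eq_zero _ _).1 this
          exact c2 (hαek ▸ hek_W2)
        · funext i
          rw [Pi.add_apply, Pi.add_apply]
          rcases zmod2_cases (ek i) with he | he <;> rcases zmod2_cases (α i) with ha | ha <;>
            rw [he, ha] <;> decide
    · -- ¬c1, c2 : contradiction
      exfalso
      have p2 : ∀ i : Fin n, ¬(k - 1 ≤ (i : ℕ) ∧ (i : ℕ) < 2 * k - 1) → α i = 0 := (hW2 α).1 c2
      rcases zmod2_cases (α j0) with h' | h'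
      · -- α ∈ S₂
        apply hne2
        right; right
        refine ⟨(hS2m α).2 fun i hi => ?_, hα0⟩
        by_cases hik : (i : ℕ) = k - 1
        · have hij : i = j0 := Fin.ext hik
          rw [hij]; exact h'
        · exact p2 i (by omega)
      · -- α = ek + (α + ek)
        apply hne2
        right; left
        refine ⟨α + ek, (hS2m _).2 fun i hi => ?_, ?_, ?_⟩
        · by_cases hik : (i : ℕ) = k - 1
          · have hij : i = j0 := Fin.ext hik
            rw [hij, Pi.add_apply, h', hek_at]
            decide
          · rw [Pi.add_apply, p2 i (by omega), hek_ne i hik, add_zero]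
        · intro hz
          have hαek : α = ek := by
            funext i
            have := congrFun hz i
            rw [Pi.add_apply] at this
            exact (zmod2_add_eq_zero _ _).1 this
          exact c1 (hαek ▸ hek_W1)
        · funext i
          rw [Pi.add_apply, Pi.add_apply]
          rcases zmod2_cases (ek i) with he | he <;> rcases zmod2_cases (α i) with ha | ha <;>
            rw [he, ha] <;> decide
    · -- neither
      rw [hfc, if_neg c1, if_neg c2, mul_zero, zero_add, zero_div]
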